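/- arXiv:1912.11987 — 8 statements merged into one kernel-verified Lean document; each statement's English description precedes it below -/
import Mathlib

section
/- Define A ◇ B = (A − B)* − A* − B* for 3×3 matrices A, B, where * denotes adjugate. Then A ◇ B = (tr(AB) − tr(A)tr(B))·I + tr(B)·A + tr(A)·B − AB − BA. -/
open Matrix

/-- With `A ◇ B = (A − B)* − A* − B*`, we have
`A ◇ B = (tr(AB) − tr(A)tr(B))·I + tr(B)·A + tr(A)·B − AB − BA`. -/
theorem diamond_eq_trace_formula (A B : Matrix (Fin 3) (Fin 3) ℝ) :
    (A - B).adjugate - A.adjugate - B.adjugate =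
      (Matrix.trace (A * B) - Matrix.trace A * Matrix.trace B) • (1 : Matrix (Fin 3) (Fin 3) ℝ)
        + (Matrix.trace B) • A + (Matrix.trace A) • B - A * B - B * A := by
  ext i j
  fin_cases i <;> fin_cases j <;>
    simp [Matrix.adjugate_fin_three, Matrix.trace_fin_three, Matrix.mul_apply,
      Fin.sum_univ_succ, Matrix.one_apply, Matrix.sub_apply, Matrix.smul_apply] <;> ring
end

section
/- The operation A ◇ B = (A − B)* − A* − B* on 3×3 matrices is bilinear in each argument: A ◇ (βB + γC) = β(A ◇ B) + γ(A ◇ C) for scalars β, γ. -/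
open Matrix

/-- The operation `A ◇ B = (A − B)* − A* − B*` on 3×3 matrices is linear in the second
argument: `A ◇ (βB + γC) = β(A ◇ B) + γ(A ◇ C)`. -/
theorem diamond_bilinear {R : Type*} [CommRing R]
    (A B C : Matrix (Fin 3) (Fin 3) R) (β γ : R) :
    (A - (β • B + γ • C)).adjugate - A.adjugate - (β • B + γ • C).adjugate =
      β • ((A - B).adjugate - A.adjugate - B.adjugate)
        + γ • ((A - C).adjugate - A.adjugate - C.adjugate) := by
  ext i j
  simp only [adjugate_fin_three, Matrix.sub_apply, Matrix.add_apply, Matrix.smul_apply, smul_eq_mul,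
    cons_val', cons_val_zero, cons_val_one, head_cons, head_fin_const, empty_val',
    cons_val_fin_one, of_apply]
  fin_cases i <;> fin_cases j <;> simp <;> ring
end

section
/- For 3×3 matrices A, B, C, D, the operation A ◇ B = (A − B)* − A* − B* satisfies (CAD) ◇ (CBD) = D*(A ◇ B)C*. -/
open Matrix

/-- The operation `A ◇ B = (A − B)* − A* − B*` satisfies `(CAD) ◇ (CBD) = D*(A ◇ B)C*`. -/
theorem diamond_congr {R : Type*} [CommRing R] (A B C D : Matrix (Fin 3) (Fin 3) R) :
    (C * A * D - C * B * D).adjugate - (C * A * D).adjugate - (C * B * D).adjugate =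
      D.adjugate * ((A - B).adjugate - A.adjugate - B.adjugate) * C.adjugate := by
  have h : C * A * D - C * B * D = C * (A - B) * D := by
    rw [Matrix.mul_sub, Matrix.sub_mul]
  rw [h, Matrix.adjugate_mul_distrib, Matrix.adjugate_mul_distrib,
    Matrix.adjugate_mul_distrib, Matrix.adjugate_mul_distrib,
    Matrix.adjugate_mul_distrib, Matrix.adjugate_mul_distrib]
  noncomm_ring
end

section
/- Any matrix of the form E = R [t]× S, where R, S are 3×3 orthogonal matrices with determinant 1 and t ∈ ℝ³, satisfies the cubic essential-matrix equation EᵀEEᵀ − (1/2)tr(EᵀE)·Eᵀ = 0. -/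
open Matrix

/-- The cross-product matrix of a vector `a ∈ ℝ³`. -/
def skew (a : Fin 3 → ℝ) : Matrix (Fin 3) (Fin 3) ℝ :=
  !![0, -a 2, a 1; a 2, 0, -a 0; -a 1, a 0, 0]

lemma skew_transpose (t : Fin 3 → ℝ) :
    (skew t)ᵀ = !![0, t 2, -t 1; -t 2, 0, t 0; t 1, -t 0, 0] := by
  ext i j
  fin_cases i <;> fin_cases j <;> simp [skew]

lemma skew_cubic (t : Fin 3 → ℝ) :
    (skew t)ᵀ * skew t * (skew t)ᵀ =
      ((1 : ℝ) / 2 * Matrix.trace ((skew t)ᵀ * skew t)) • (skew t)ᵀ := by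
  rw [skew_transpose]
  ext i j
  fin_cases i <;> fin_cases j <;>
    simp [skew, Matrix.mul_apply, Matrix.trace, Matrix.diag, Fin.sum_univ_succ] <;> ring

/-- Any `E = R [t]× S` with `R, S ∈ SO(3)` satisfies `EᵀEEᵀ − (1/2)tr(EᵀE)·Eᵀ = 0`. -/
theorem essential_cubic_constraint (R S : Matrix (Fin 3) (Fin 3) ℝ) (t : Fin 3 → ℝ)
    (hR : R * Rᵀ = 1) (hRdet : R.det = 1) (hS : S * Sᵀ = 1) (hSdet : S.det = 1)
    (E : Matrix (Fin 3) (Fin 3) ℝ) (hE : E = R * skew t * S) :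
    Eᵀ * E * Eᵀ - ((1 : ℝ) / 2 * Matrix.trace (Eᵀ * E)) • Eᵀ = 0 := by
  have hR' : Rᵀ * R = 1 := mul_eq_one_comm.mp hR
  have hS' : Sᵀ * S = 1 := mul_eq_one_comm.mp hS
  set K := skew t with hK
  have hEt : Eᵀ = Sᵀ * Kᵀ * Rᵀ := by
    rw [hE]; simp [Matrix.transpose_mul, Matrix.mul_assoc]
  have h1 : Eᵀ * E * Eᵀ = Sᵀ * (Kᵀ * K * Kᵀ) * Rᵀ := by
    rw [hEt, hE]
    calc Sᵀ * Kᵀ * Rᵀ * (R * K * S) * (Sᵀ * Kᵀ * Rᵀ)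
        = Sᵀ * Kᵀ * (Rᵀ * R) * K * (S * Sᵀ) * Kᵀ * Rᵀ := by
          simp only [Matrix.mul_assoc]
      _ = Sᵀ * (Kᵀ * K * Kᵀ) * Rᵀ := by
          rw [hR', hS]; simp [Matrix.mul_assoc]
  have h2 : Matrix.trace (Eᵀ * E) = Matrix.trace (Kᵀ * K) := by
    rw [hEt, hE]
    have : Sᵀ * Kᵀ * Rᵀ * (R * K * S) = Sᵀ * (Kᵀ * K) * S := by
      calc Sᵀ * Kᵀ * Rᵀ * (R * K * S) = Sᵀ * Kᵀ * (Rᵀ * R) * K * S := by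
            simp only [Matrix.mul_assoc]
        _ = Sᵀ * (Kᵀ * K) * S := by rw [hR']; simp [Matrix.mul_assoc]
    rw [this, Matrix.trace_mul_cycle, ← Matrix.mul_assoc, hS, Matrix.one_mul]
  rw [h1, h2, hEt, skew_cubic]
  simp [Matrix.smul_mul, Matrix.mul_smul, hK]
end

section
/- For any vectors c, d ∈ ℝ³, tr([c]× [d]× [−c−d]×) = 0; equivalently, setting E₁₂ = [c]×, E₂₃ = [d]×, E₃₁ = −[c]× − [d]×, one has tr(E₁₂E₂₃E₃₁) = 0. -/
open Matrix

/-- With `E₁₂ = [c]×`, `E₂₃ = [d]×`, `E₃₁ = −[c]× − [d]×`, one has `tr(E₁₂E₂₃E₃₁) = 0`. -/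
theorem trace_triple_skew (c d : Fin 3 → ℝ) :
    Matrix.trace (skew c * skew d * (-skew c - skew d)) = 0 := by
  simp only [skew, Matrix.trace_fin_three]
  simp [Matrix.mul_apply, Fin.sum_univ_three, Matrix.sub_apply, Matrix.neg_apply]
  ring
end

section
/- For any vectors c, d ∈ ℝ³, with E₁₂ = [c]×, E₂₃ = [d]×, E₃₁ = −[c]× − [d]×, one has E₂₃ᵀE₁₂* + E₂₃*E₁₂ᵀ + (E₁₂E₂₃) ◇ E₃₁ᵀ = 0, where A ◇ B = (A − B)* − A* − B* and * denotes adjugate. -/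
open Matrix

/-- The operation `A ◇ B = (A − B)* − A* − B*`. -/
def dia (A B : Matrix (Fin 3) (Fin 3) ℝ) : Matrix (Fin 3) (Fin 3) ℝ :=
  (A - B).adjugate - A.adjugate - B.adjugate

set_option maxHeartbeats 4000000 in
/-- With `E₁₂ = [c]×`, `E₂₃ = [d]×`, `E₃₁ = −[c]× − [d]×`:
`E₂₃ᵀE₁₂* + E₂₃*E₁₂ᵀ + (E₁₂E₂₃) ◇ E₃₁ᵀ = 0`. -/
theorem skew_diamond_constraint (c d : Fin 3 → ℝ) :
    (skew d)ᵀ * (skew c).adjugate + (skew d).adjugate * (skew c)ᵀ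
      + dia (skew c * skew d) (-skew c - skew d)ᵀ = 0 := by
  have hdT : (skew d)ᵀ = !![0, d 2, -d 1; -d 2, 0, d 0; d 1, -d 0, 0] := by
    ext i j; fin_cases i <;> fin_cases j <;> simp [skew]
  have hcT : (skew c)ᵀ = !![0, c 2, -c 1; -c 2, 0, c 0; c 1, -c 0, 0] := by
    ext i j; fin_cases i <;> fin_cases j <;> simp [skew]
  have hT : (-skew c - skew d)ᵀ =
      !![0, -(c 2 + d 2), c 1 + d 1; c 2 + d 2, 0, -(c 0 + d 0);
        -(c 1 + d 1), c 0 + d 0, 0] := by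
    ext i j; fin_cases i <;> fin_cases j <;> simp [skew] <;> ring
  have hP : skew c * skew d =
      !![-(c 2 * d 2) - c 1 * d 1, c 1 * d 0, c 2 * d 0;
        c 0 * d 1, -(c 2 * d 2) - c 0 * d 0, c 2 * d 1;
        c 0 * d 2, c 1 * d 2, -(c 1 * d 1) - c 0 * d 0] := by
    ext i j
    fin_cases i <;> fin_cases j <;>
      simp [skew, Matrix.mul_apply, Fin.sum_univ_three] <;> ring
  rw [hdT, hcT, hT, hP, dia]
  have hsub : (!![-(c 2 * d 2) - c 1 * d 1, c 1 * d 0, c 2 * d 0;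
        c 0 * d 1, -(c 2 * d 2) - c 0 * d 0, c 2 * d 1;
        c 0 * d 2, c 1 * d 2, -(c 1 * d 1) - c 0 * d 0] -
      !![0, -(c 2 + d 2), c 1 + d 1; c 2 + d 2, 0, -(c 0 + d 0);
        -(c 1 + d 1), c 0 + d 0, 0]) =
      !![-(c 2 * d 2) - c 1 * d 1, c 1 * d 0 + (c 2 + d 2), c 2 * d 0 - (c 1 + d 1);
        c 0 * d 1 - (c 2 + d 2), -(c 2 * d 2) - c 0 * d 0, c 2 * d 1 + (c 0 + d 0);
        c 0 * d 2 + (c 1 + d 1), c 1 * d 2 - (c 0 + d 0), -(c 1 * d 1) - c 0 * d 0] := by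
    ext i j; fin_cases i <;> fin_cases j <;> simp <;> ring
  rw [hsub]
  simp only [skew, Matrix.adjugate_fin_three_of, Matrix.mul_fin_three]
  ext i j
  fin_cases i <;> fin_cases j <;> simp <;> ring
end

section
/- Let E₁₂, E₂₃, E₃₁ be a compatible triplet of essential matrices, i.e. Eᵢⱼ = Rᵢ [bᵢ − bⱼ]× Rⱼᵀ for some R₁, R₂, R₃ ∈ SO(3) and b₁, b₂, b₃ ∈ ℝ³. Then tr(E₁₂E₂₃E₃₁) = 0. -/
open Matrix

/-- For a compatible triplet of essential matrices, `tr(E₁₂E₂₃E₃₁) = 0`. -/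
theorem trace_compatible_triplet
    (R₁ R₂ R₃ : Matrix (Fin 3) (Fin 3) ℝ) (b₁ b₂ b₃ : Fin 3 → ℝ)
    (hR₁ : R₁ * R₁ᵀ = 1) (hR₁det : R₁.det = 1)
    (hR₂ : R₂ * R₂ᵀ = 1) (hR₂det : R₂.det = 1)
    (hR₃ : R₃ * R₃ᵀ = 1) (hR₃det : R₃.det = 1)
    (E₁₂ E₂₃ E₃₁ : Matrix (Fin 3) (Fin 3) ℝ)
    (hE₁₂ : E₁₂ = R₁ * skew (b₁ - b₂) * R₂ᵀ)
    (hE₂₃ : E₂₃ = R₂ * skew (b₂ - b₃) * R₃ᵀ)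
    (hE₃₁ : E₃₁ = R₃ * skew (b₃ - b₁) * R₁ᵀ) :
    Matrix.trace (E₁₂ * E₂₃ * E₃₁) = 0 := by
  have h₂ : R₂ᵀ * R₂ = 1 := mul_eq_one_comm.mp hR₂
  have h₃ : R₃ᵀ * R₃ = 1 := mul_eq_one_comm.mp hR₃
  have h₁ : R₁ᵀ * R₁ = 1 := mul_eq_one_comm.mp hR₁
  subst hE₁₂ hE₂₃ hE₃₁
  have key : R₁ * skew (b₁ - b₂) * R₂ᵀ * (R₂ * skew (b₂ - b₃) * R₃ᵀ) *
      (R₃ * skew (b₃ - b₁) * R₁ᵀ) =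
      R₁ * (skew (b₁ - b₂) * skew (b₂ - b₃) * skew (b₃ - b₁)) * R₁ᵀ := by
    calc R₁ * skew (b₁ - b₂) * R₂ᵀ * (R₂ * skew (b₂ - b₃) * R₃ᵀ) *
        (R₃ * skew (b₃ - b₁) * R₁ᵀ)
        = R₁ * skew (b₁ - b₂) * (R₂ᵀ * R₂) * skew (b₂ - b₃) * (R₃ᵀ * R₃) *
          skew (b₃ - b₁) * R₁ᵀ := by noncomm_ring
      _ = R₁ * (skew (b₁ - b₂) * skew (b₂ - b₃) * skew (b₃ - b₁)) * R₁ᵀ := by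
          rw [h₂, h₃]; noncomm_ring
  rw [key, Matrix.trace_mul_cycle, ← Matrix.mul_assoc, h₁, Matrix.one_mul]
  simp [skew, Matrix.trace_fin_three, Matrix.mul_apply, Fin.sum_univ_three]
  ring
end

section
/- Let essential matrices be given as E₁₂ = [b₁₂]× R₁₂, E₂₃ = [b₂₃]× R₂₃, E₃₁ = [b₃₁]× R₃₁ with Rᵢⱼ ∈ SO(3) and bᵢⱼ ∈ ℝ³. If R₁₂R₂₃R₃₁ = I and R₁₂ᵀ b₁₂ + R₂₃ b₃₁ + b₂₃ = 0, then the triplet is compatible: there exist R₁, R₂, R₃ ∈ SO(3) and b₁, b₂, b₃ ∈ ℝ³ with Eᵢⱼ = Rᵢ [bᵢ − bⱼ]× Rⱼᵀ for (i,j) ∈ {(1,2),(2,3),(3,1)}. -/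
open Matrix

lemma skew_mulVec_adj (M : Matrix (Fin 3) (Fin 3) ℝ) (a : Fin 3 → ℝ) :
    skew (M *ᵥ a) * M = M.adjugateᵀ * skew a := by
  ext i j
  fin_cases i <;> fin_cases j <;>
    simp [skew, Matrix.mulVec, Matrix.mul_apply, Fin.sum_univ_three,
      Matrix.adjugate_fin_three, dotProduct, Matrix.transpose_apply,
      Matrix.vecHead, Matrix.vecTail] <;> ring

lemma skew_rot (R : Matrix (Fin 3) (Fin 3) ℝ) (hR : R * Rᵀ = 1) (hdet : R.det = 1)
    (a : Fin 3 → ℝ) : skew (R *ᵥ a) = R * skew a * Rᵀ := by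
  have hinv : R⁻¹ = Rᵀ := Matrix.inv_eq_right_inv hR
  have hadj : R.adjugate = Rᵀ := by
    rw [← hinv, Matrix.inv_def, hdet]; simp
  calc skew (R *ᵥ a) = skew (R *ᵥ a) * (R * Rᵀ) := by rw [hR, mul_one]
    _ = (skew (R *ᵥ a) * R) * Rᵀ := by rw [mul_assoc]
    _ = R * skew a * Rᵀ := by rw [skew_mulVec_adj, hadj, Matrix.transpose_transpose]


/-- If `R₁₂R₂₃R₃₁ = I` and `R₁₂ᵀ b₁₂ + R₂₃ b₃₁ + b₂₃ = 0`, then the triplet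
`E₁₂ = [b₁₂]× R₁₂`, `E₂₃ = [b₂₃]× R₂₃`, `E₃₁ = [b₃₁]× R₃₁` is compatible. -/
theorem sufficient_Rt_compatibility
    (R₁₂ R₂₃ R₃₁ : Matrix (Fin 3) (Fin 3) ℝ) (b₁₂ b₂₃ b₃₁ : Fin 3 → ℝ)
    (hR₁₂ : R₁₂ * R₁₂ᵀ = 1) (hR₁₂det : R₁₂.det = 1)
    (hR₂₃ : R₂₃ * R₂₃ᵀ = 1) (hR₂₃det : R₂₃.det = 1)
    (hR₃₁ : R₃₁ * R₃₁ᵀ = 1) (hR₃₁det : R₃₁.det = 1)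
    (hprod : R₁₂ * R₂₃ * R₃₁ = 1)
    (hsum : R₁₂ᵀ *ᵥ b₁₂ + R₂₃ *ᵥ b₃₁ + b₂₃ = 0) :
    ∃ (R₁ R₂ R₃ : Matrix (Fin 3) (Fin 3) ℝ) (b₁ b₂ b₃ : Fin 3 → ℝ),
      R₁ * R₁ᵀ = 1 ∧ R₁.det = 1 ∧ R₂ * R₂ᵀ = 1 ∧ R₂.det = 1 ∧
      R₃ * R₃ᵀ = 1 ∧ R₃.det = 1 ∧
      skew b₁₂ * R₁₂ = R₁ * skew (b₁ - b₂) * R₂ᵀ ∧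
      skew b₂₃ * R₂₃ = R₂ * skew (b₂ - b₃) * R₃ᵀ ∧
      skew b₃₁ * R₃₁ = R₃ * skew (b₃ - b₁) * R₁ᵀ := by
  -- left inverses
  have hR₁₂' : R₁₂ᵀ * R₁₂ = 1 := mul_eq_one_comm.mp hR₁₂
  have hR₂₃' : R₂₃ᵀ * R₂₃ = 1 := mul_eq_one_comm.mp hR₂₃
  have hR₃₁' : R₃₁ᵀ * R₃₁ = 1 := mul_eq_one_comm.mp hR₃₁
  -- R₁₂ * R₂₃ = R₃₁ᵀ
  have hprod' : R₁₂ * R₂₃ = R₃₁ᵀ := by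
    calc R₁₂ * R₂₃ = (R₁₂ * R₂₃ * R₃₁) * R₃₁ᵀ := by
          rw [mul_assoc, mul_assoc, hR₃₁, mul_one]
      _ = R₃₁ᵀ := by rw [hprod, one_mul]
  -- R₂₃ = (R₃₁ * R₁₂)ᵀ
  have hR23eq : R₂₃ = R₁₂ᵀ * R₃₁ᵀ := by
    have := congrArg (fun M => R₁₂ᵀ * M) hprod'
    simpa [← mul_assoc, hR₁₂'] using this
  refine ⟨1, R₁₂ᵀ, R₃₁, 0, -b₁₂, (R₁₂ * R₂₃) *ᵥ b₃₁, ?_, ?_, ?_, ?_, ?_, ?_, ?_, ?_, ?_⟩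
  · simp
  · simp
  · simpa using hR₁₂'
  · simpa using hR₁₂det
  · exact hR₃₁
  · exact hR₃₁det
  · simp [sub_neg_eq_add]
  · -- second equation
    have hb : (-b₁₂ : Fin 3 → ℝ) - (R₁₂ * R₂₃) *ᵥ b₃₁ = R₁₂ *ᵥ b₂₃ := by
      have h2 : b₂₃ = -(R₁₂ᵀ *ᵥ b₁₂ + R₂₃ *ᵥ b₃₁) := eq_neg_of_add_eq_zero_right hsum
      rw [h2, neg_add]
      simp only [Matrix.mulVec_add, Matrix.mulVec_neg, neg_add]
      have hb12 : R₁₂ *ᵥ R₁₂ᵀ *ᵥ b₁₂ = b₁₂ := by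
        rw [Matrix.mulVec_mulVec, hR₁₂, Matrix.one_mulVec]
      rw [hb12, Matrix.mulVec_mulVec]
      abel
    rw [hb, skew_rot R₁₂ hR₁₂ hR₁₂det]
    symm
    calc R₁₂ᵀ * (R₁₂ * skew b₂₃ * R₁₂ᵀ) * R₃₁ᵀ
        = (R₁₂ᵀ * R₁₂) * skew b₂₃ * (R₁₂ᵀ * R₃₁ᵀ) := by
          simp only [mul_assoc]
      _ = skew b₂₃ * R₂₃ := by rw [hR₁₂', one_mul, ← hR23eq]
  · -- third equation
    have hdet31T : (R₃₁ᵀ).det = 1 := by simpa using hR₃₁det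
    have horth31T : R₃₁ᵀ * (R₃₁ᵀ)ᵀ = 1 := by simpa using hR₃₁'
    rw [hprod', sub_zero, skew_rot R₃₁ᵀ horth31T hdet31T]
    symm
    calc R₃₁ * (R₃₁ᵀ * skew b₃₁ * R₃₁ᵀᵀ) * (1 : Matrix (Fin 3) (Fin 3) ℝ)ᵀ
        = (R₃₁ * R₃₁ᵀ) * skew b₃₁ * R₃₁ := by
          simp [mul_assoc]
      _ = skew b₃₁ * R₃₁ := by rw [hR₃₁, one_mul]
end
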